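/- Let D be a squarefree integer with D ≥ 5 and D ∉ {7, 11, 15}. Then 2, 3 and 4 are the only elements z of R_D \ {0, 1} with Re(1/z) ≥ 1/4, and consequently the only triples (μ₁, μ₂, μ₃) of elements of R_D \ {0, 1} with 1/μ₁ + 1/μ₂ + 1/μ₃ = 1 are (2, 3, 6), (2, 4, 4) and (3, 3, 3) up to permutation. -/
import Mathlib

open Polynomial

/-- The generator of the ring of integers of `ℚ(i√D)`. -/
noncomputable def alphaD (D : ℕ) : ℂ :=
  if D % 4 = 3 then (1 + Complex.I * Real.sqrt D) / 2 else Complex.I * Real.sqrt D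

/-- The ring of integers `R_D = ℤ[α_D]` of `ℚ(i√D)`, viewed as a subset of `ℂ`. -/
noncomputable def RD (D : ℕ) : Set ℂ :=
  {z | ∃ x y : ℤ, z = (x : ℂ) + (y : ℂ) * alphaD D}

lemma alphaD_im_aux (D : ℕ) (hD : 5 ≤ D) (hD7 : D ≠ 7) (hD11 : D ≠ 11) (hD15 : D ≠ 15) :
    2 < (alphaD D).im := by
  unfold alphaD
  split_ifs with h
  · have hD19 : (19:ℕ) ≤ D := by omega
    have him : ((1 + Complex.I * (Real.sqrt D : ℝ)) / 2).im = Real.sqrt D / 2 := by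
      simp [Complex.div_im, Complex.normSq]
    rw [him]
    have : (4:ℝ) < Real.sqrt D := by
      rw [show (4:ℝ) = Real.sqrt 16 by
        rw [show (16:ℝ) = 4^2 by norm_num, Real.sqrt_sq]; norm_num]
      apply Real.sqrt_lt_sqrt (by norm_num)
      exact_mod_cast by omega
    linarith
  · have him : (Complex.I * (Real.sqrt D : ℝ)).im = Real.sqrt D := by simp
    rw [him]
    rw [show (2:ℝ) = Real.sqrt 4 by
      rw [show (4:ℝ) = 2^2 by norm_num, Real.sqrt_sq]; norm_num]
    apply Real.sqrt_lt_sqrt (by norm_num)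
    exact_mod_cast by omega

lemma keyA (D : ℕ) (hD : 5 ≤ D) (hD7 : D ≠ 7) (hD11 : D ≠ 11) (hD15 : D ≠ 15)
    (z : ℂ) (hz : z ∈ RD D) (h0 : z ≠ 0) (h1 : z ≠ 1) (hre : (1/z).re ≥ 1/4) :
    z = 2 ∨ z = 3 ∨ z = 4 := by
  obtain ⟨x, y, rfl⟩ := hz
  have hs := alphaD_im_aux D hD hD7 hD11 hD15
  set z : ℂ := (x : ℂ) + (y : ℂ) * alphaD D with hzdef
  have hzim : z.im = y * (alphaD D).im := by
    simp [hzdef, Complex.add_im, Complex.mul_im]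
  have hnsq : 0 < Complex.normSq z := Complex.normSq_pos.mpr h0
  have hre' : z.re / Complex.normSq z ≥ 1/4 := by
    rwa [one_div, Complex.inv_re] at hre
  have hkey : 4 * z.re ≥ z.re^2 + z.im^2 := by
    have := (div_le_div_iff₀ (by norm_num) hnsq).mp hre'
    have hn : Complex.normSq z = z.re^2 + z.im^2 := by
      rw [Complex.normSq_apply]; ring
    nlinarith
  have him2 : z.im^2 ≤ 4 := by nlinarith [sq_nonneg (z.re - 2)]
  have hy : y = 0 := by
    by_contra hy
    have h1y : (1:ℝ) ≤ (y:ℝ)^2 := by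
      have h := Int.one_le_abs (show y ≠ 0 from hy)
      have : (1:ℤ) ≤ y^2 := by nlinarith [sq_abs y]
      exact_mod_cast this
    rw [hzim] at him2
    have hexp : ((y:ℝ))^2 * (alphaD D).im^2 ≤ 4 := by nlinarith
    nlinarith [mul_le_mul_of_nonneg_right h1y (sq_nonneg ((alphaD D).im))]
  subst hy
  have hz2 : z = (x:ℂ) := by simp [hzdef]
  rw [hz2] at h0 h1 hre ⊢
  have hx0 : x ≠ 0 := by exact_mod_cast fun h => h0 (by exact_mod_cast h)
  have hx1 : x ≠ 1 := by exact_mod_cast fun h => h1 (by exact_mod_cast h)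
  have hrex : (1:ℝ)/(x:ℝ) ≥ 1/4 := by
    have : (1/(x:ℂ)) = (((1/(x:ℝ)):ℝ):ℂ) := by push_cast; ring
    rw [this, Complex.ofReal_re] at hre
    exact hre
  have hxpos : (0:ℝ) < (x:ℝ) := by
    rcases lt_trichotomy ((x:ℝ)) 0 with h|h|h
    · have := one_div_neg.mpr h; linarith
    · exact absurd (by exact_mod_cast h) hx0
    · exact h
  have hx4 : (x:ℝ) ≤ 4 := by
    rw [ge_iff_le, le_div_iff₀ hxpos] at hrex; linarith
  have hxZ : x = 2 ∨ x = 3 ∨ x = 4 := by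
    have h1 : (0:ℤ) < x := by exact_mod_cast hxpos
    have h2 : (x:ℤ) ≤ 4 := by exact_mod_cast hx4
    omega
  rcases hxZ with h|h|h <;> subst h <;> norm_num

/-- Core asymmetric classification for the sum of three reciprocals. -/
lemma coreB (D : ℕ) (hD : 5 ≤ D) (hD7 : D ≠ 7) (hD11 : D ≠ 11) (hD15 : D ≠ 15)
    (a b c : ℂ) (ha : a ∈ RD D) (hb : b ∈ RD D) (hc : c ∈ RD D)
    (ha0 : a ≠ 0) (ha1 : a ≠ 1) (hb0 : b ≠ 0) (hb1 : b ≠ 1) (hc0 : c ≠ 0) (hc1 : c ≠ 1)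
    (hsum : 1/a + 1/b + 1/c = 1)
    (hra : (1/a).re ≥ 1/4) (hrb : (1/b).re ≥ 1/4) :
    ({a, b, c} : Multiset ℂ) = {2, 3, 6} ∨
    ({a, b, c} : Multiset ℂ) = {2, 4, 4} ∨
    ({a, b, c} : Multiset ℂ) = {3, 3, 3} := by
  have hA := keyA D hD hD7 hD11 hD15 a ha ha0 ha1 hra
  have hB := keyA D hD hD7 hD11 hD15 b hb hb0 hb1 hrb
  have hcontra512 : 1/c ≠ (5:ℂ)/12 := by
    intro h512
    have hrc : (1/c).re ≥ 1/4 := by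
      rw [h512]; norm_num [Complex.div_re, Complex.normSq]
    rcases keyA D hD hD7 hD11 hD15 c hc hc0 hc1 hrc with h|h|h <;>
      (rw [h] at h512; norm_num at h512)
  rcases hA with rfl|rfl|rfl <;> rcases hB with rfl|rfl|rfl
  · -- a = 2, b = 2 : 1/c = 0, contradiction
    exfalso
    have : (1:ℂ)/c = 0 := by linear_combination hsum
    exact one_div_ne_zero hc0 this
  · -- a = 2, b = 3 : c = 6
    have h6 : (1:ℂ)/c = 1/6 := by linear_combination hsum
    have : c = 6 := by field_simp at h6; exact h6.symm
    subst this; left; rfl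
  · -- a = 2, b = 4 : c = 4
    have h4 : (1:ℂ)/c = 1/4 := by linear_combination hsum
    have : c = 4 := by field_simp at h4; exact h4.symm
    subst this; right; left; rfl
  · -- a = 3, b = 2 : c = 6
    have h6 : (1:ℂ)/c = 1/6 := by linear_combination hsum
    have : c = 6 := by field_simp at h6; exact h6.symm
    subst this; left
    show (3:ℂ) ::ₘ 2 ::ₘ {6} = 2 ::ₘ 3 ::ₘ {6}
    exact Multiset.cons_swap _ _ _
  · -- a = 3, b = 3 : c = 3
    have h3 : (1:ℂ)/c = 1/3 := by linear_combination hsum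
    have : c = 3 := by field_simp at h3; exact h3.symm
    subst this; right; right; rfl
  · -- a = 3, b = 4 : 1/c = 5/12, contradiction
    exfalso
    exact hcontra512 (by linear_combination hsum)
  · -- a = 4, b = 2 : c = 4
    have h4 : (1:ℂ)/c = 1/4 := by linear_combination hsum
    have : c = 4 := by field_simp at h4; exact h4.symm
    subst this; right; left
    show (4:ℂ) ::ₘ 2 ::ₘ {4} = 2 ::ₘ 4 ::ₘ {4}
    exact Multiset.cons_swap _ _ _
  · -- a = 4, b = 3 : contradiction
    exfalso
    exact hcontra512 (by linear_combination hsum)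
  · -- a = 4, b = 4 : c = 2
    have h2 : (1:ℂ)/c = 1/2 := by linear_combination hsum
    have : c = 2 := by field_simp at h2; exact h2.symm
    subst this; right; left
    show (4:ℂ) ::ₘ 4 ::ₘ {2} = 2 ::ₘ 4 ::ₘ {4}
    rw [show ((4:ℂ) ::ₘ ({2} : Multiset ℂ)) = 2 ::ₘ {4} from Multiset.cons_swap _ _ _,
      Multiset.cons_swap]

theorem stmt_5 (D : ℕ) (hD : 5 ≤ D) (hsf : Squarefree D)
    (hD7 : D ≠ 7) (hD11 : D ≠ 11) (hD15 : D ≠ 15) :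
    ({z : ℂ | z ∈ RD D ∧ z ≠ 0 ∧ z ≠ 1 ∧ (1 / z).re ≥ 1 / 4} = {2, 3, 4}) ∧
    ∀ μ₁ μ₂ μ₃ : ℂ, μ₁ ∈ RD D → μ₂ ∈ RD D → μ₃ ∈ RD D →
      μ₁ ≠ 0 → μ₁ ≠ 1 → μ₂ ≠ 0 → μ₂ ≠ 1 → μ₃ ≠ 0 → μ₃ ≠ 1 →
      1 / μ₁ + 1 / μ₂ + 1 / μ₃ = 1 →
      ({μ₁, μ₂, μ₃} : Multiset ℂ) = {2, 3, 6} ∨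
      ({μ₁, μ₂, μ₃} : Multiset ℂ) = {2, 4, 4} ∨
      ({μ₁, μ₂, μ₃} : Multiset ℂ) = {3, 3, 3} := by
  constructor
  · ext z
    simp only [Set.mem_setOf_eq, Set.mem_insert_iff, Set.mem_singleton_iff]
    constructor
    · rintro ⟨hz, h0, h1, hre⟩
      exact keyA D hD hD7 hD11 hD15 z hz h0 h1 hre
    · rintro (rfl|rfl|rfl)
      · exact ⟨⟨2, 0, by push_cast; ring⟩, by norm_num, by norm_num,
          by norm_num [Complex.div_re, Complex.normSq]⟩
      · exact ⟨⟨3, 0, by push_cast; ring⟩, by norm_num, by norm_num,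
          by norm_num [Complex.div_re, Complex.normSq]⟩
      · exact ⟨⟨4, 0, by push_cast; ring⟩, by norm_num, by norm_num,
          by norm_num [Complex.div_re, Complex.normSq]⟩
  · intro μ₁ μ₂ μ₃ h1 h2 h3 h10 h11 h20 h21 h30 h31 hsum
    have hre : (1/μ₁).re + (1/μ₂).re + (1/μ₃).re = 1 := by
      have := congrArg Complex.re hsum
      simpa using this
    -- helper : once one index has re ≥ 1/3, knock out the value and find the second index
    have key : ∀ a b c : ℂ, a ∈ RD D → b ∈ RD D → c ∈ RD D →
        a ≠ 0 → a ≠ 1 → b ≠ 0 → b ≠ 1 → c ≠ 0 → c ≠ 1 →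
        1/a + 1/b + 1/c = 1 → (1/a).re ≥ 1/3 →
        ({a, b, c} : Multiset ℂ) = {2, 3, 6} ∨
        ({a, b, c} : Multiset ℂ) = {2, 4, 4} ∨
        ({a, b, c} : Multiset ℂ) = {3, 3, 3} := by
      intro a b c ha hb hc ha0 ha1 hb0 hb1 hc0 hc1 hs hra
      have hra4 : (1/a).re ≥ 1/4 := by linarith
      have hva := keyA D hD hD7 hD11 hD15 a ha ha0 ha1 hra4
      have hrea : (1/a).re ≤ 1/2 := by
        rcases hva with rfl|rfl|rfl <;> norm_num [Complex.div_re, Complex.normSq]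
      have hrs : (1/a).re + (1/b).re + (1/c).re = 1 := by
        have := congrArg Complex.re hs
        simpa using this
      have hbc : (1/b).re ≥ 1/4 ∨ (1/c).re ≥ 1/4 := by
        by_contra hcon
        push_neg at hcon
        obtain ⟨hh1, hh2⟩ := hcon
        linarith
      rcases hbc with hrb | hrc
      · exact coreB D hD hD7 hD11 hD15 a b c ha hb hc ha0 ha1 hb0 hb1 hc0 hc1 hs hra4 hrb
      · have hs' : 1/a + 1/c + 1/b = 1 := by linear_combination hs
        have := coreB D hD hD7 hD11 hD15 a c b ha hc hb ha0 ha1 hc0 hc1 hb0 hb1 hs' hra4 hrc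
        have hperm : ({a, c, b} : Multiset ℂ) = {a, b, c} := by
          show a ::ₘ c ::ₘ {b} = a ::ₘ b ::ₘ {c}
          congr 1
          exact Multiset.cons_swap _ _ _
        rwa [hperm] at this
    have hone : (1/μ₁).re ≥ 1/3 ∨ (1/μ₂).re ≥ 1/3 ∨ (1/μ₃).re ≥ 1/3 := by
      by_contra hcon
      push_neg at hcon
      obtain ⟨a1, a2, a3⟩ := hcon
      linarith
    rcases hone with h|h|h
    · exact key μ₁ μ₂ μ₃ h1 h2 h3 h10 h11 h20 h21 h30 h31 hsum h
    · have hs' : 1/μ₂ + 1/μ₁ + 1/μ₃ = 1 := by linear_combination hsum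
      have := key μ₂ μ₁ μ₃ h2 h1 h3 h20 h21 h10 h11 h30 h31 hs' h
      have hperm : ({μ₂, μ₁, μ₃} : Multiset ℂ) = {μ₁, μ₂, μ₃} :=
        Multiset.cons_swap _ _ _
      rwa [hperm] at this
    · have hs' : 1/μ₃ + 1/μ₁ + 1/μ₂ = 1 := by linear_combination hsum
      have := key μ₃ μ₁ μ₂ h3 h1 h2 h30 h31 h10 h11 h20 h21 hs' h
      have hperm : ({μ₃, μ₁, μ₂} : Multiset ℂ) = {μ₁, μ₂, μ₃} := by
        show μ₃ ::ₘ μ₁ ::ₘ {μ₂} = μ₁ ::ₘ μ₂ ::ₘ {μ₃}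
        rw [Multiset.cons_swap]
        congr 1
        exact Multiset.cons_swap _ _ _
      rwa [hperm] at this
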